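/- arXiv:2203.15715 — 3 statements merged into one kernel-verified Lean document; each statement's English description precedes it below -/
import Mathlib

section
/- Let H be a complex Hilbert space and let x, y ∈ H be two non-zero vectors. For the rank one operator T = x⊗y, the mean transform satisfies M(x⊗y) = (1/2)(x + (⟨x,y⟩/‖y‖²) y) ⊗ y. -/
noncomputable section

variable {H : Type*} [NormedAddCommGroup H] [InnerProductSpace ℂ H] [CompleteSpace H]

/-- The modulus `|T| = (T*T)^(1/2)` of a bounded operator. -/
noncomputable def absOp (T : H →L[ℂ] H) : H →L[ℂ] H :=
  CFC.sqrt (ContinuousLinearMap.adjoint T * T)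

/-- `V` is the partial isometry appearing in the polar decomposition `T = V|T|` of `T`,
i.e. `V` is a partial isometry, `V|T| = T` and `ker V = ker T`. -/
def IsPolarIsometry (T V : H →L[ℂ] H) : Prop :=
  V * ContinuousLinearMap.adjoint V * V = V ∧ V * absOp T = T ∧
    LinearMap.ker (V : H →ₗ[ℂ] H) = LinearMap.ker (T : H →ₗ[ℂ] H)

open Classical in
/-- The mean transform `M(T) = (V|T| + |T|V)/2`, where `T = V|T|` is the
polar decomposition of `T`. -/
noncomputable def meanTransform (T : H →L[ℂ] H) : H →L[ℂ] H :=
  if h : ∃ V, IsPolarIsometry T V then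
    (2 : ℂ)⁻¹ • (h.choose * absOp T + absOp T * h.choose)
  else 0

/-- The rank one operator `x ⊗ y : u ↦ ⟨u, y⟩ x` (inner product linear in the
first variable, so `⟨u, y⟩ = inner y u` in mathlib's convention). -/
noncomputable def rankOne (x y : H) : H →L[ℂ] H :=
  (innerSL ℂ y).smulRight x

/-- The Jordan product `A ∘ B = (AB + BA)/2`. -/
noncomputable def jordanProd (A B : H →L[ℂ] H) : H →L[ℂ] H :=
  (2 : ℂ)⁻¹ • (A * B + B * A)

/-- An orthogonal projection: `P² = P = P*`. -/
def IsOrthogonalProjection (P : H →L[ℂ] H) : Prop :=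
  P * P = P ∧ ContinuousLinearMap.adjoint P = P

/-- A quasi-normal operator: `T(T*T) = (T*T)T`. -/
def IsQuasinormal (T : H →L[ℂ] H) : Prop :=
  T * (ContinuousLinearMap.adjoint T * T) = ContinuousLinearMap.adjoint T * T * T

/-- A rank one orthogonal projection: an operator of the form `x ⊗ x` for a unit vector `x`. -/
def IsRankOneProjection (T : H →L[ℂ] H) : Prop :=
  ∃ x : H, ‖x‖ = 1 ∧ T = rankOne x x

set_option linter.unusedSectionVars false

lemma rankOne_apply (x y u : H) : rankOne x y u = (inner ℂ y u : ℂ) • x := rfl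

lemma rankOne_mul (a b c d : H) :
    rankOne a b * rankOne c d = (inner ℂ b c : ℂ) • rankOne a d := by
  ext u
  simp [rankOne_apply, ContinuousLinearMap.mul_apply, smul_smul, mul_comm]

lemma adjoint_rankOne (a b : H) :
    ContinuousLinearMap.adjoint (rankOne a b) = rankOne b a := by
  rw [eq_comm, ContinuousLinearMap.eq_adjoint_iff]
  intro u v
  simp only [rankOne_apply, inner_smul_left, inner_smul_right, inner_conj_symm]
  ring

lemma rankOne_isPositive (y : H) : (rankOne y y).IsPositive := by
  constructor
  · rw [← ContinuousLinearMap.isSelfAdjoint_iff_isSymmetric, ContinuousLinearMap.isSelfAdjoint_iff']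
    exact adjoint_rankOne y y
  · intro u
    simp only [ContinuousLinearMap.reApplyInnerSelf_apply, rankOne_apply, inner_smul_left,
      ← Complex.normSq_eq_conj_mul_self]
    simpa using Complex.normSq_nonneg _

lemma smul_rankOne_nonneg (c : ℝ) (hc : 0 ≤ c) (y : H) :
    (0 : H →L[ℂ] H) ≤ (c : ℂ) • rankOne y y := by
  rw [ContinuousLinearMap.nonneg_iff_isPositive]
  constructor
  · rw [← ContinuousLinearMap.isSelfAdjoint_iff_isSymmetric, ContinuousLinearMap.isSelfAdjoint_iff']
    rw [map_smulₛₗ, adjoint_rankOne]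
    simp [Complex.conj_ofReal]
  · intro u
    have := (rankOne_isPositive y).2 u
    simp only [ContinuousLinearMap.reApplyInnerSelf_apply, ContinuousLinearMap.smul_apply,
      inner_smul_left] at this ⊢
    rw [Complex.conj_ofReal]
    have h2 : ((c:ℂ) * inner ℂ (rankOne y y u) u).re = c * (inner ℂ (rankOne y y u) u : ℂ).re := by
      simp [Complex.mul_re, Complex.ofReal_re]
    calc (0:ℝ) ≤ c * (inner ℂ (rankOne y y u) u : ℂ).re := mul_nonneg hc this
    _ = _ := by rw [← h2]; norm_num

lemma absOp_rankOne (x y : H) (hy : y ≠ 0) :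
    absOp (rankOne x y) = ((‖x‖ / ‖y‖ : ℝ) : ℂ) • rankOne y y := by
  have hb : (0:H →L[ℂ] H) ≤ ((‖x‖ / ‖y‖ : ℝ) : ℂ) • rankOne y y :=
    smul_rankOne_nonneg _ (by positivity) y
  rw [absOp, adjoint_rankOne, rankOne_mul]
  refine CFC.sqrt_unique ?_ hb
  rw [smul_mul_smul_comm, rankOne_mul, smul_smul]
  congr 1
  have hy' : (‖y‖:ℂ) ≠ 0 := by simpa using hy
  rw [inner_self_eq_norm_sq_to_K, inner_self_eq_norm_sq_to_K]
  push_cast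
  field_simp
  exact mul_comm _ _

lemma rankOne_smul_left (a : ℂ) (x y : H) : rankOne (a • x) y = a • rankOne x y := by
  ext u
  simp only [rankOne_apply, ContinuousLinearMap.smul_apply]
  rw [smul_comm]

lemma rankOne_add_left (x x' y : H) : rankOne (x + x') y = rankOne x y + rankOne x' y := by
  ext u; simp [rankOne_apply, smul_add]

lemma polarIsometry_rankOne (x y : H) (hx : x ≠ 0) (hy : y ≠ 0) :
    IsPolarIsometry (rankOne x y) ((((‖x‖:ℂ) * ‖y‖)⁻¹) • rankOne x y) := by
  have hx' : (‖x‖:ℂ) ≠ 0 := by simpa using hx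
  have hy' : (‖y‖:ℂ) ≠ 0 := by simpa using hy
  have hxx : (inner ℂ x x : ℂ) = (‖x‖:ℂ)^2 := by
    exact_mod_cast inner_self_eq_norm_sq_to_K _
  have hyy : (inner ℂ y y : ℂ) = (‖y‖:ℂ)^2 := by
    exact_mod_cast inner_self_eq_norm_sq_to_K _
  refine ⟨?_, ?_, ?_⟩
  · rw [map_smulₛₗ, adjoint_rankOne]
    simp only [smul_mul_assoc, mul_smul_comm, rankOne_mul, smul_smul]
    congr 1
    rw [hxx, hyy, map_inv₀, map_mul, Complex.conj_ofReal, Complex.conj_ofReal]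
    field_simp
  · rw [absOp_rankOne x y hy]
    simp only [smul_mul_assoc, mul_smul_comm, rankOne_mul, smul_smul]
    rw [hyy]
    have : ((‖x‖ / ‖y‖ : ℝ):ℂ) * (((‖x‖:ℂ) * ‖y‖)⁻¹ * (‖y‖:ℂ)^2) = 1 := by
      push_cast; field_simp
    rw [this, one_smul]
  · have hc : (((‖x‖:ℂ) * ‖y‖)⁻¹) ≠ 0 := by
      simp [hx', hy']
    ext u
    simp only [LinearMap.mem_ker, ContinuousLinearMap.coe_coe, ContinuousLinearMap.smul_apply,
      smul_eq_zero, hc, false_or]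

lemma polar_unique (x y : H) (hx : x ≠ 0) (hy : y ≠ 0) (V : H →L[ℂ] H)
    (h2 : V * absOp (rankOne x y) = rankOne x y)
    (h3 : LinearMap.ker (V : H →ₗ[ℂ] H) = LinearMap.ker (rankOne x y : H →ₗ[ℂ] H)) :
    V = (((‖x‖:ℂ) * ‖y‖)⁻¹) • rankOne x y := by
  have hx' : (‖x‖:ℂ) ≠ 0 := by simpa using hx
  have hy' : (‖y‖:ℂ) ≠ 0 := by simpa using hy
  have hyy : (inner ℂ y y : ℂ) = (‖y‖:ℂ)^2 := by
    exact_mod_cast inner_self_eq_norm_sq_to_K _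
  have habs := absOp_rankOne x y hy
  -- V y
  have hVy : V y = ((‖y‖:ℂ) / ‖x‖) • x := by
    have := congrArg (fun A => A y) h2
    simp only [ContinuousLinearMap.mul_apply, habs, ContinuousLinearMap.smul_apply,
      rankOne_apply, hyy, map_smul] at this
    have hc : ((‖x‖ / ‖y‖ : ℝ):ℂ) * (‖y‖:ℂ)^2 ≠ 0 := by
      push_cast; field_simp
      exact mul_ne_zero hx' hy'
    rw [smul_smul] at this
    have := congrArg (fun v => (((‖x‖ / ‖y‖ : ℝ):ℂ) * (‖y‖:ℂ)^2)⁻¹ • v) this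
    simp only [smul_smul, inv_mul_cancel₀ hc, one_smul] at this
    rw [this]
    congr 1
    push_cast
    field_simp
  ext u
  -- decompose u
  have hker : u - ((inner ℂ y u : ℂ) / (‖y‖:ℂ)^2) • y ∈ LinearMap.ker (V : H →ₗ[ℂ] H) := by
    rw [h3, LinearMap.mem_ker]
    show rankOne x y (u - ((inner ℂ y u : ℂ) / (‖y‖:ℂ)^2) • y) = 0
    rw [map_sub, map_smul, rankOne_apply, rankOne_apply, hyy]
    rw [smul_smul]
    have : (inner ℂ y u : ℂ) / (‖y‖:ℂ)^2 * (‖y‖:ℂ)^2 = inner ℂ y u := by field_simp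
    rw [this, sub_self]
  rw [LinearMap.mem_ker] at hker
  have hVu : V u = ((inner ℂ y u : ℂ) / (‖y‖:ℂ)^2) • V y := by
    have h0 : V u - V (((inner ℂ y u : ℂ) / (‖y‖:ℂ)^2) • y) = 0 := by
      rw [← map_sub]; exact hker
    rw [← map_smul]
    exact sub_eq_zero.mp h0
  rw [hVu, hVy, ContinuousLinearMap.smul_apply, rankOne_apply, smul_smul, smul_smul]
  congr 1
  field_simp

theorem meanTransform_rankOne (x y : H) (hx : x ≠ 0) (hy : y ≠ 0) :
    meanTransform (rankOne x y) =
      rankOne ((2 : ℂ)⁻¹ • (x + ((inner ℂ y x : ℂ) / (‖y‖ : ℂ) ^ 2) • y)) y := by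
  have hx' : (‖x‖:ℂ) ≠ 0 := by simpa using hx
  have hy' : (‖y‖:ℂ) ≠ 0 := by simpa using hy
  have hyy : (inner ℂ y y : ℂ) = (‖y‖:ℂ)^2 := by
    exact_mod_cast inner_self_eq_norm_sq_to_K _
  have hex : ∃ V, IsPolarIsometry (rankOne x y) V :=
    ⟨_, polarIsometry_rankOne x y hx hy⟩
  rw [meanTransform, dif_pos hex]
  have hspec := hex.choose_spec
  have hV : hex.choose = (((‖x‖:ℂ) * ‖y‖)⁻¹) • rankOne x y :=
    polar_unique x y hx hy _ hspec.2.1 hspec.2.2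
  rw [hV, absOp_rankOne x y hy]
  rw [rankOne_smul_left, rankOne_add_left, rankOne_smul_left]
  rw [smul_mul_smul_comm, rankOne_mul, smul_mul_smul_comm, rankOne_mul]
  rw [smul_smul, smul_smul, hyy]
  rw [smul_add]
  have h1 : ((‖x‖:ℂ) * ‖y‖)⁻¹ * ((‖x‖ / ‖y‖ : ℝ):ℂ) * (‖y‖:ℂ)^2 = 1 := by
    push_cast; field_simp
  have h2 : ((‖x‖ / ‖y‖ : ℝ):ℂ) * ((‖x‖:ℂ) * ‖y‖)⁻¹ * (inner ℂ y x : ℂ)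
      = (inner ℂ y x : ℂ) / (‖y‖:ℂ)^2 := by
    push_cast; field_simp
  rw [h1, h2, one_smul, ← smul_add]



end
end

section
/- Let H and K be complex Hilbert spaces and let Φ : B(H) → B(K) be a bijective map satisfying M(Φ(A)∘Φ(B)) = Φ(M(A∘B)) for all A, B ∈ B(H). Then Φ(0) = 0. -/
noncomputable section

variable {H : Type*} [NormedAddCommGroup H] [InnerProductSpace ℂ H] [CompleteSpace H]

set_option synthInstance.maxHeartbeats 1000000 in
lemma absOp_zero' : absOp (0 : H →L[ℂ] H) = 0 := by
  unfold absOp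
  rw [mul_zero, CFC.sqrt_zero]

lemma meanTransform_zero' : meanTransform (0 : H →L[ℂ] H) = 0 := by
  unfold meanTransform
  split
  · rw [absOp_zero', mul_zero, zero_mul, add_zero, smul_zero]
  · rfl

lemma jordanProd_zero_left' (B : H →L[ℂ] H) : jordanProd 0 B = 0 := by
  unfold jordanProd
  rw [zero_mul, mul_zero, add_zero, smul_zero]

theorem phi_zero
    {K : Type*} [NormedAddCommGroup K] [InnerProductSpace ℂ K] [CompleteSpace K]
    (Φ : (H →L[ℂ] H) → (K →L[ℂ] K)) (hΦ : Function.Bijective Φ)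
    (hc : ∀ A B : H →L[ℂ] H,
      meanTransform (jordanProd (Φ A) (Φ B)) = Φ (meanTransform (jordanProd A B))) :
    Φ 0 = 0 := by
  obtain ⟨X, hX⟩ := hΦ.2 0
  have h2 : jordanProd X 0 = 0 := by
    unfold jordanProd; rw [mul_zero, zero_mul, add_zero, smul_zero]
  calc Φ 0 = Φ (meanTransform (jordanProd X 0)) := by rw [h2, meanTransform_zero']
  _ = meanTransform (jordanProd (Φ X) (Φ 0)) := (hc X 0).symm
  _ = 0 := by rw [hX, jordanProd_zero_left', meanTransform_zero']

end
end

section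
/- Let H and K be complex Hilbert spaces and let Φ : B(H) → B(K) be a bijective map satisfying M(Φ(A)∘Φ(B)) = Φ(M(A∘B)) for all A, B ∈ B(H). Then Φ(I) = I, where I denotes the identity operator. -/
noncomputable section

variable {H : Type*} [NormedAddCommGroup H] [InnerProductSpace ℂ H] [CompleteSpace H]

section Auxiliary

set_option synthInstance.maxHeartbeats 1000000
set_option maxHeartbeats 2000000

private lemma two_cancel {M : Type*} [AddCommGroup M] [Module ℂ M] {x y : M}
    (h : x + x = y + y) : x = y := by
  have h2 : (2 : ℂ) • x = (2 : ℂ) • y := by rw [two_smul, two_smul]; exact h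
  exact smul_right_injective M two_ne_zero h2

private lemma density_lemma (A E B : H →L[ℂ] H) (hAsa : star A = A) (hEA : E * A = A)
    (hEE : E * E = E) (hkerE : ∀ z, A z = 0 → E z = 0) (hBA : B * A = 0) : B * E = 0 := by
  have hAdj : ContinuousLinearMap.adjoint A = A := by
    rw [← ContinuousLinearMap.star_eq_adjoint, hAsa]
  have hflip : ∀ u v : H, (inner ℂ (A u) v : ℂ) = inner ℂ u (A v) := by
    intro u v
    have := ContinuousLinearMap.adjoint_inner_left A v u
    rwa [hAdj] at this
  have key : ∀ B' : H →L[ℂ] H, B' * A = 0 →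
      ∀ w ∈ (LinearMap.range (A : H →ₗ[ℂ] H)).topologicalClosure, B' w = 0 := by
    intro B' hB' w hw
    have h1 : LinearMap.range (A : H →ₗ[ℂ] H) ≤ LinearMap.ker (B' : H →ₗ[ℂ] H) := by
      rintro _ ⟨v, rfl⟩
      have : (B' * A) v = 0 := by rw [hB']; rfl
      simpa [ContinuousLinearMap.mul_apply] using this
    exact Submodule.topologicalClosure_minimal _ h1 (ContinuousLinearMap.isClosed_ker B') hw
  ext x
  simp only [ContinuousLinearMap.mul_apply, ContinuousLinearMap.zero_apply]
  set Kc := (LinearMap.range (A : H →ₗ[ℂ] H)).topologicalClosure with hKc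
  haveI : CompleteSpace Kc := (Submodule.isClosed_topologicalClosure _).completeSpace_coe
  set y : H := (Kc.orthogonalProjectionOnto (E x) : H) with hy
  have hyK : y ∈ Kc := (Kc.orthogonalProjectionOnto (E x)).2
  have hzo : E x - y ∈ Kcᗮ := Submodule.sub_starProjection_mem_orthogonal (K := Kc) (E x)
  have hzr : E x - y ∈ (LinearMap.range (A : H →ₗ[ℂ] H))ᗮ :=
    Submodule.orthogonal_le (Submodule.le_topologicalClosure _) hzo
  set z : H := E x - y with hzdef
  have h0 : ∀ u : H, (inner ℂ (A u) z : ℂ) = 0 := fun u => hzr (A u) ⟨u, rfl⟩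
  have hAz : A z = 0 := by
    have h2 : (inner ℂ (A z) (A z) : ℂ) = 0 := by
      rw [← hflip (A z) z]
      exact h0 (A z)
    exact inner_self_eq_zero.mp h2
  have hEz : E z = 0 := hkerE _ hAz
  have hEy : E y = y := by
    have hEmA : (E - 1) * A = 0 := by rw [sub_mul, hEA, one_mul, sub_self]
    have := key (E - 1) hEmA y hyK
    simpa [ContinuousLinearMap.sub_apply, ContinuousLinearMap.one_apply, sub_eq_zero] using this
  have hExy : E x = y := by
    have h1 : E (E x) = E x := by
      have := congrArg (fun (f : H →L[ℂ] H) => f x) hEE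
      simpa [ContinuousLinearMap.mul_apply] using this
    have h2 : E (E x) = E z + E y := by rw [← map_add]; congr 1; simp [hzdef]
    rw [hEz, hEy, zero_add] at h2
    rw [← h1, h2]
  rw [hExy]
  exact key B hBA y hyK

private lemma absOp_sa (X : H →L[ℂ] H) : star (absOp X) = absOp X :=
  IsSelfAdjoint.of_nonneg (CFC.sqrt_nonneg _)

private lemma absOp_mul_self (X : H →L[ℂ] H) : absOp X * absOp X = star X * X := by
  unfold absOp
  rw [← ContinuousLinearMap.star_eq_adjoint]
  exact CFC.sqrt_mul_sqrt_self _ (star_mul_self_nonneg X)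

private lemma absOp_zero_iff (X : H →L[ℂ] H) (x : H) : absOp X x = 0 ↔ X x = 0 := by
  set A := absOp X with hA
  have hAsa : star A = A := absOp_sa X
  have hAdj : ContinuousLinearMap.adjoint A = A := by
    rw [← ContinuousLinearMap.star_eq_adjoint, hAsa]
  have hinner : (inner ℂ (A x) (A x) : ℂ) = inner ℂ (X x) (X x) := by
    have h1 : (inner ℂ (A x) (A x) : ℂ) = inner ℂ x (A (A x)) := by
      have := ContinuousLinearMap.adjoint_inner_right A x (A x)
      rw [hAdj] at this
      exact this.symm
    have h2 : A (A x) = (star X) (X x) := by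
      have := congrArg (fun (f : H →L[ℂ] H) => f x) (absOp_mul_self X)
      simpa [ContinuousLinearMap.mul_apply] using this
    rw [h1, h2, ContinuousLinearMap.star_eq_adjoint,
      ContinuousLinearMap.adjoint_inner_right]
  constructor
  · intro hz
    have hzz : (inner ℂ (X x) (X x) : ℂ) = 0 := by rw [← hinner, hz, inner_zero_left]
    exact inner_self_eq_zero.mp hzz
  · intro hz
    have hzz : (inner ℂ (A x) (A x) : ℂ) = 0 := by rw [hinner, hz, inner_zero_left]
    exact inner_self_eq_zero.mp hzz

private lemma absOp_of_proj {P : H →L[ℂ] H} (hP : IsOrthogonalProjection P) : absOp P = P := by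
  obtain ⟨h1, h2⟩ := hP
  have h2' : star P = P := by rw [ContinuousLinearMap.star_eq_adjoint]; exact h2
  have hpos : (0 : H →L[ℂ] H) ≤ P := by
    conv_rhs => rw [← h1]
    nth_rewrite 1 [← h2']
    exact star_mul_self_nonneg P
  unfold absOp
  rw [← ContinuousLinearMap.star_eq_adjoint, h2', h1]
  exact CFC.sqrt_unique h1 hpos

private lemma meanTransform_proj {P : H →L[ℂ] H} (hP : IsOrthogonalProjection P) :
    meanTransform P = P := by
  obtain ⟨h1, h2⟩ := hP
  have habs : absOp P = P := absOp_of_proj ⟨h1, h2⟩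
  have hex : ∃ V, IsPolarIsometry P V := by
    refine ⟨P, ?_, ?_, rfl⟩
    · rw [h2, h1, h1]
    · rw [habs, h1]
  rw [meanTransform, dif_pos hex]
  set V := hex.choose with hVdef
  obtain ⟨hV1, hV2, hV3⟩ := hex.choose_spec
  rw [habs] at hV2
  have hVP : V = P := by
    ext x
    have ha : V (P x) = P x := by
      have := congrArg (fun (f : H →L[ℂ] H) => f x) hV2
      simpa [ContinuousLinearMap.mul_apply] using this
    have hb : V (x - P x) = 0 := by
      have hker : x - P x ∈ LinearMap.ker (V : H →ₗ[ℂ] H) := by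
        rw [hV3]
        apply LinearMap.mem_ker.mpr
        have := congrArg (fun (f : H →L[ℂ] H) => f x) h1
        simp only [ContinuousLinearMap.mul_apply] at this
        simp [map_sub, this]
      exact LinearMap.mem_ker.mp hker
    have : V (P x) + V (x - P x) = V x := by rw [← map_add]; congr 1; abel
    rw [ha, hb, add_zero] at this
    rw [← this]
  rw [habs, hVP, h1]
  rw [← two_smul ℂ P, smul_smul]
  norm_num

/-- The key rigidity lemma: if `M(T²) = T` then `T` is an orthogonal projection. -/
private lemma proj_of_meanTransform_sq {T : H →L[ℂ] H}
    (h : meanTransform (T * T) = T) : IsOrthogonalProjection T := by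
  rw [meanTransform] at h
  by_cases hex : ∃ V, IsPolarIsometry (T * T) V
  case neg =>
    rw [dif_neg hex] at h
    refine ⟨?_, ?_⟩ <;> rw [← h]
    · simp
    · rw [← ContinuousLinearMap.star_eq_adjoint]; simp
  rw [dif_pos hex] at h
  set A := absOp (T * T) with hAdef
  set V := hex.choose with hVdef
  obtain ⟨hV1, hVA, hker⟩ := hex.choose_spec
  rw [← ContinuousLinearMap.star_eq_adjoint] at hV1
  rw [← hVdef] at hV1 hVA hker
  rw [← hAdef] at hVA
  have hAsa : star A = A := absOp_sa _
  have hkerA : ∀ x, A x = 0 ↔ (T * T) x = 0 := absOp_zero_iff _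
  have hkerV : ∀ x, (T * T) x = 0 → V x = 0 := by
    intro x hx
    have : x ∈ LinearMap.ker (V : H →ₗ[ℂ] H) := by rw [hker]; exact LinearMap.mem_ker.mpr hx
    exact LinearMap.mem_ker.mp this
  set E := star V * V with hEdef
  have hEsa : star E = E := by rw [hEdef, star_mul, star_star]
  have hE2 : E * E = E := by
    rw [hEdef]
    calc star V * V * (star V * V) = star V * (V * star V * V) := by noncomm_ring
      _ = star V * V := by rw [hV1]
  have hEA : E * A = A := by
    ext x
    simp only [ContinuousLinearMap.mul_apply]
    set u := A x - E (A x) with hu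
    have hEu : E u = 0 := by
      have h1 : E (E (A x)) = E (A x) := by
        have := congrArg (fun (f : H →L[ℂ] H) => f (A x)) hE2
        simpa [ContinuousLinearMap.mul_apply] using this
      rw [hu, map_sub, h1, sub_self]
    have hVu : V u = 0 := by
      have h2 : (inner ℂ (V u) (V u) : ℂ) = inner ℂ (E u) u := by
        rw [hEdef]
        have := ContinuousLinearMap.adjoint_inner_left V u (V u)
        rw [← ContinuousLinearMap.star_eq_adjoint] at this
        rw [← this]; rfl
      rw [hEu, inner_zero_left] at h2
      exact inner_self_eq_zero.mp h2
    have hAu : A u = 0 := by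
      apply (hkerA u).mpr
      apply LinearMap.mem_ker.mp
      rw [← hker]
      exact LinearMap.mem_ker.mpr hVu
    have huu : (inner ℂ u u : ℂ) = 0 := by
      have hflipA : ∀ a b : H, (inner ℂ (A a) b : ℂ) = inner ℂ a (A b) := by
        intro a b
        have := ContinuousLinearMap.adjoint_inner_left A b a
        rw [← ContinuousLinearMap.star_eq_adjoint, hAsa] at this
        exact this
      have hx1 : (inner ℂ (A x) u : ℂ) = 0 := by rw [hflipA, hAu, inner_zero_right]
      have hx2 : (inner ℂ (E (A x)) u : ℂ) = 0 := by
        have hflipE : (inner ℂ (E (A x)) u : ℂ) = inner ℂ (A x) (E u) := by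
          have := ContinuousLinearMap.adjoint_inner_left E u (A x)
          rw [← ContinuousLinearMap.star_eq_adjoint, hEsa] at this
          exact this
        rw [hflipE, hEu, inner_zero_right]
      rw [hu, inner_sub_left, hx1, hx2, sub_self]
    have : u = 0 := inner_self_eq_zero.mp huu
    rw [hu] at this
    have := sub_eq_zero.mp this
    exact this.symm
  have hAE : A * E = A := by
    have := congrArg star hEA
    rwa [star_mul, hAsa, hEsa] at this
  have hVE : V * E = V := by rw [hEdef, ← mul_assoc]; exact hV1
  have hsum : V * A + A * V = T + T := by
    have h2 := congrArg (fun z : H →L[ℂ] H => (2 : ℂ) • z) h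
    rw [smul_inv_smul₀ two_ne_zero, two_smul] at h2
    exact h2
  have hAV : A * V = T + T - T * T := by
    have h3 := hsum
    rw [hVA] at h3
    exact eq_sub_of_add_eq' h3
  have hTE : T * E = T := by
    apply two_cancel
    calc T * E + T * E = (V * A + A * V) * E := by rw [hsum]; noncomm_ring
      _ = V * (A * E) + A * (V * E) := by noncomm_ring
      _ = V * A + A * V := by rw [hAE, hVE]
      _ = T + T := hsum
  have hsQ : star (T * T) = star T * star T := by rw [star_mul]
  have hsVQ : star V * (T * T) = A := by
    rw [← hVA, ← mul_assoc, ← hEdef]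
    exact hEA
  have hA_alt : star T * star T * V = A := by
    have := congrArg star hsVQ
    rwa [star_mul, star_star, hsQ, hAsa] at this
  have hR : star V * T = star T * V := by
    apply two_cancel
    have hL : star V * T + star V * T = A + star V * A * V := by
      calc star V * T + star V * T = star V * (T + T) := by noncomm_ring
        _ = star V * (V * A + A * V) := by rw [hsum]
        _ = (star V * V) * A + star V * A * V := by noncomm_ring
        _ = A + star V * A * V := by rw [← hEdef, hEA]
    have hRr : star T * V + star T * V = A + star V * A * V := by
      calc star T * V + star T * V = star (T + T) * V := by rw [star_add]; noncomm_ring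
        _ = star (V * A + A * V) * V := by rw [hsum]
        _ = (A * star V + star V * A) * V := by
            rw [star_add, star_mul, star_mul, hAsa]
        _ = A * (star V * V) + star V * A * V := by noncomm_ring
        _ = A + star V * A * V := by rw [← hEdef, hAE]
    rw [hL, hRr]
  have hAT : A * T = star T * A := by
    calc A * T = (star T * star T * V) * T := by rw [hA_alt]
      _ = star T * ((star T * V) * T) := by noncomm_ring
      _ = star T * ((star V * T) * T) := by rw [hR]
      _ = star T * (star V * (T * T)) := by noncomm_ring
      _ = star T * A := by rw [hsVQ]
  have hIII : A * (T * T) = (T + T - T * T) * A := by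
    calc A * (T * T) = A * (V * A) := by rw [hVA]
      _ = (A * V) * A := by noncomm_ring
      _ = (T + T - T * T) * A := by rw [hAV]
  have hIV : (star T * star T + T * T - (T + T)) * A = 0 := by
    have h1 : star T * star T * A = A * (T * T) := by
      calc star T * star T * A = star T * (star T * A) := by noncomm_ring
        _ = star T * (A * T) := by rw [hAT]
        _ = (star T * A) * T := by noncomm_ring
        _ = (A * T) * T := by rw [hAT]
        _ = A * (T * T) := by noncomm_ring
    calc (star T * star T + T * T - (T + T)) * A
        = star T * star T * A + (T * T) * A - (T + T) * A := by noncomm_ring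
      _ = (T + T - T * T) * A + (T * T) * A - (T + T) * A := by rw [h1, hIII]
      _ = 0 := by noncomm_ring
  have hkerE : ∀ z, A z = 0 → E z = 0 := by
    intro z hz
    have hVz : V z = 0 := hkerV z ((hkerA z).mp hz)
    show (star V * V) z = 0
    simp [ContinuousLinearMap.mul_apply, hVz]
  have hdens := density_lemma A E _ hAsa hEA hE2 hkerE hIV
  have hQE : (T * T) * E = T * T := by
    calc (T * T) * E = T * (T * E) := by noncomm_ring
      _ = T * T := by rw [hTE]
  have hVlem : star T * star T * E = T + T - T * T := by
    have h1 : star T * star T * E + (T * T) * E - (T + T) * E = 0 := by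
      calc star T * star T * E + (T * T) * E - (T + T) * E
          = (star T * star T + T * T - (T + T)) * E := by noncomm_ring
        _ = 0 := hdens
    have h2 : (T + T) * E = T + T := by rw [add_mul, hTE]
    rw [hQE, h2] at h1
    have h3 := sub_eq_zero.mp h1
    exact eq_sub_of_add_eq h3
  have hsTsTE : star T * star T * E = A * V := by rw [hVlem, hAV]
  have hEQ : E * (T * T) = star V * A := by
    have h1 := congrArg star hsTsTE
    rw [star_mul (star T * star T) E, star_mul (star T) (star T), star_star, hEsa,
      star_mul A V, hAsa] at h1
    exact h1
  have hcsum : E * T + E * T = star V * A + A * V := by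
    calc E * T + E * T = E * (T + T) := by noncomm_ring
      _ = E * (V * A) + E * (A * V) := by rw [← hsum]; noncomm_ring
      _ = E * (T * T) + (E * A) * V := by rw [hVA]; noncomm_ring
      _ = star V * A + A * V := by rw [hEQ, hEA]
  have hcs : star (E * T) = E * T := by
    apply two_cancel
    calc star (E * T) + star (E * T) = star (E * T + E * T) := by rw [star_add]
      _ = star (star V * A + A * V) := by rw [hcsum]
      _ = A * V + star V * A := by
          rw [star_add, star_mul, star_star, hAsa, star_mul, hAsa]

      _ = E * T + E * T := by rw [hcsum]; abel
  have hcc : (E * T) * (E * T) = E * (T * T) := by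
    calc (E * T) * (E * T) = E * ((T * E) * T) := by noncomm_ring
      _ = E * (T * T) := by rw [hTE]
  have hEQ2 : E * (T * T) = T + T - T * T := by
    have h1 : star (E * (T * T)) = E * (T * T) := by
      rw [← hcc, star_mul, hcs]
    have h2 : star (E * (T * T)) = T + T - T * T := by
      rw [star_mul, hsQ, hEsa, hVlem]
    rw [← h1, h2]
  have hcc2 : (E * T) * (E * T) = E * T := by
    apply two_cancel
    have h4 : E * (T * T) = E * T + E * T - E * (T * T) := by
      have h5 := congrArg (fun z : H →L[ℂ] H => E * z) hEQ2
      have h6 : E * (E * (T * T)) = E * (T * T) := by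
        calc E * (E * (T * T)) = (E * E) * (T * T) := by noncomm_ring
          _ = E * (T * T) := by rw [hE2]
      rw [h6] at h5
      calc E * (T * T) = E * (T + T - T * T) := h5
        _ = E * T + E * T - E * (T * T) := by noncomm_ring
    calc (E * T) * (E * T) + (E * T) * (E * T) = E * (T * T) + E * (T * T) := by rw [hcc]
      _ = (E * T + E * T - E * (T * T)) + E * (T * T) := by nth_rewrite 1 [h4]; rfl
      _ = E * T + E * T := by noncomm_ring
  have hQc : T * T = T * (E * T) := by
    calc T * T = (T * E) * T := by rw [hTE]
      _ = T * (E * T) := by noncomm_ring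
  have hTTc : T + T = E * T + T * T := by
    have h6 : E * T = T + T - T * T := by rw [← hcc2, hcc, hEQ2]
    rw [h6]; abel
  have h8 : T * T = E * T := by
    have h7 := congrArg (fun z : H →L[ℂ] H => z * (E * T)) hTTc
    have hL : (T + T) * (E * T) = T * T + T * T := by
      rw [add_mul, ← hQc]
    have h9 : (T * T) * (E * T) = T * T := by
      calc (T * T) * (E * T) = (T * (E * T)) * (E * T) := by rw [← hQc]
        _ = T * ((E * T) * (E * T)) := by noncomm_ring
        _ = T * (E * T) := by rw [hcc2]
        _ = T * T := by rw [← hQc]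
    have hRr : (E * T + T * T) * (E * T) = E * T + T * T := by
      calc (E * T + T * T) * (E * T) = (E * T) * (E * T) + (T * T) * (E * T) := by noncomm_ring
        _ = E * T + T * T := by rw [hcc2, h9]
    rw [hL, hRr] at h7
    exact add_right_cancel h7
  have hTQ : T = T * T := by
    apply two_cancel
    rw [hTTc, h8]
  have hTc : T = E * T := hTQ.trans h8
  have hsT : star T = T := by
    calc star T = star (E * T) := by rw [← hTc]
      _ = E * T := hcs
      _ = T := hTc.symm
  exact ⟨hTQ.symm, by rw [← ContinuousLinearMap.star_eq_adjoint, hsT]⟩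

private lemma jordanProd_self (T : H →L[ℂ] H) : jordanProd T T = T * T := by
  unfold jordanProd
  rw [← two_smul ℂ (T * T), smul_smul]
  norm_num

private lemma jordanProd_one_left (T : H →L[ℂ] H) : jordanProd 1 T = T := by
  unfold jordanProd
  rw [one_mul, mul_one, ← two_smul ℂ T, smul_smul]
  norm_num

private lemma jordanProd_one_right (T : H →L[ℂ] H) : jordanProd T 1 = T := by
  unfold jordanProd
  rw [one_mul, mul_one, ← two_smul ℂ T, smul_smul]
  norm_num

private lemma isOrthogonalProjection_one : IsOrthogonalProjection (1 : H →L[ℂ] H) :=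
  ⟨one_mul 1, by rw [← ContinuousLinearMap.star_eq_adjoint, star_one]⟩

end Auxiliary

theorem phi_one
    {K : Type*} [NormedAddCommGroup K] [InnerProductSpace ℂ K] [CompleteSpace K]
    (Φ : (H →L[ℂ] H) → (K →L[ℂ] K)) (hΦ : Function.Bijective Φ)
    (hc : ∀ A B : H →L[ℂ] H,
      meanTransform (jordanProd (Φ A) (Φ B)) = Φ (meanTransform (jordanProd A B))) :
    Φ 1 = 1 := by
  obtain ⟨S, hS⟩ := hΦ.2 1
  have hM1 : meanTransform (1 : K →L[ℂ] K) = 1 := meanTransform_proj isOrthogonalProjection_one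
  -- Step 1: M(S²) = S
  have step1 := hc S S
  rw [hS, jordanProd_one_left, hM1, jordanProd_self] at step1
  have hMSS : meanTransform (S * S) = S := hΦ.1 (by rw [← step1, hS])
  -- Step 2: S is an orthogonal projection, hence M(S) = S
  have hSproj := proj_of_meanTransform_sq hMSS
  have hMS : meanTransform S = S := meanTransform_proj hSproj
  -- Step 3: M(Φ 1) = 1
  have step2 := hc S 1
  rw [hS, jordanProd_one_left, jordanProd_one_right, hMS, hS] at step2
  -- step2 : meanTransform (Φ 1) = 1
  -- Step 4: M(Φ1 * Φ1) = Φ 1, so Φ 1 is an orthogonal projection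
  have hM1H : meanTransform (1 : H →L[ℂ] H) = 1 := meanTransform_proj isOrthogonalProjection_one
  have step3 := hc 1 1
  rw [jordanProd_self, jordanProd_one_left, hM1H] at step3
  have hCproj := proj_of_meanTransform_sq step3
  have hMC : meanTransform (Φ 1) = Φ 1 := meanTransform_proj hCproj
  rw [step2] at hMC
  exact hMC.symm

end
end
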